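/- For every n ≥ 1, every word w ∈ W_n and every prescribed values a, b, c ∈ ℝ, there exist x0, x1, x2 ∈ ℝ and a harmonic-type function U : K → ℝ with boundary values (x0,x1,x2) such that U(f_w(p0)) = a, U(f_w(p1)) = b and U(f_w(p2)) = c. -/

import Mathlib

open MeasureTheory Filter Set
open scoped ENNReal NNReal Classical

noncomputable section

namespace SG

/-- The three vertices `p₀ = (0,0)`, `p₁ = (1,0)`, `p₂ = (1/2, √3/2)` viewed in `ℂ`. -/
def p : Fin 3 → ℂ := ![0, 1, 1/2 + (Real.sqrt 3 / 2) * Complex.I]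

/-- The three contraction maps `fᵢ x = (x + pᵢ)/2`. -/
def f (i : Fin 3) (x : ℂ) : ℂ := (x + p i) / 2

/-- `K` is the Sierpinski gasket: the (unique) nonempty compact set with
`K = f₀(K) ∪ f₁(K) ∪ f₂(K)`. -/
def IsSG (K : Set ℂ) : Prop :=
  K.Nonempty ∧ IsCompact K ∧ K = f 0 '' K ∪ f 1 '' K ∪ f 2 '' K

/-- `α = log 3 / log 2`. -/
def alpha : ℝ := Real.log 3 / Real.log 2

/-- `β* = log 5 / log 2`. -/
def betastar : ℝ := Real.log 5 / Real.log 2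

/-- The normalized `α`-dimensional Hausdorff measure restricted to `K`. -/
def nu (K : Set ℂ) : Measure ℂ :=
  ((Measure.hausdorffMeasure alpha : Measure ℂ) K)⁻¹ •
    (Measure.hausdorffMeasure alpha : Measure ℂ).restrict K

/-- `f_w` for a finite word `w` over `{0,1,2}` (empty word gives the identity). -/
def fwl : List (Fin 3) → ℂ → ℂ
  | [] => id
  | i :: t => f i ∘ fwl t

/-- `f_w` for a word `w ∈ W_n = {0,1,2}ⁿ`. -/
def fw {n : ℕ} (w : Fin n → Fin 3) : ℂ → ℂ := fwl (List.ofFn w)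

/-- The cell `K_w = f_w(K)`. -/
def Kw (K : Set ℂ) {n : ℕ} (w : Fin n → Fin 3) : Set ℂ := fw w '' K

/-- Adjacency `w⁽¹⁾ ∼ₙ w⁽²⁾`: distinct words with intersecting cells. -/
def Adj (K : Set ℂ) {n : ℕ} (w1 w2 : Fin n → Fin 3) : Prop :=
  w1 ≠ w2 ∧ (Kw K w1 ∩ Kw K w2).Nonempty

/-- `Pₙu(w) = ∫_K u(f_w(x)) ν(dx)`. -/
def P (K : Set ℂ) {n : ℕ} (u : ℂ → ℝ) (w : Fin n → Fin 3) : ℝ :=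
  ∫ x, u (fw w x) ∂(nu K)

/-- `Aₙ(u)`: sum over unordered adjacent pairs in `W_n` of `(Pₙu(w⁽¹⁾) − Pₙu(w⁽²⁾))²`
(written as half the sum over ordered pairs). -/
def A (K : Set ℂ) (n : ℕ) (u : ℂ → ℝ) : ℝ :=
  (1/2) * ∑ w1 : Fin n → Fin 3, ∑ w2 : Fin n → Fin 3,
    if Adj K w1 w2 then (P K u w1 - P K u w2)^2 else 0

/-- The remaining index of `{0,1,2}` besides `i` and `j` (when `i ≠ j`):
since `0+1+2 = 0` in `Fin 3`, it is `-(i+j)`. -/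
def other (i j : Fin 3) : Fin 3 := -(i + j)

/-- `U : K → ℝ` is harmonic-type with boundary values `(x0, x1, x2)`:
continuous on `K`, `U(pᵢ) = xᵢ`, and for every finite word `w` and distinct `i, j`
(with `k` the remaining index),
`U(f_w((pᵢ+pⱼ)/2)) = (2 U(f_w(pᵢ)) + 2 U(f_w(pⱼ)) + U(f_w(p_k)))/5`. -/
def IsHarm (K : Set ℂ) (x0 x1 x2 : ℝ) (U : ℂ → ℝ) : Prop :=
  ContinuousOn U K ∧ U (p 0) = x0 ∧ U (p 1) = x1 ∧ U (p 2) = x2 ∧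
  ∀ (w : List (Fin 3)) (i j : Fin 3), i ≠ j →
    U (fwl w ((p i + p j) / 2)) =
      (2 * U (fwl w (p i)) + 2 * U (fwl w (p j)) + U (fwl w (p (other i j)))) / 5

set_option linter.unusedTactic false
set_option linter.unreachableTactic false
set_option linter.unnecessarySeqFocus false
set_option linter.unusedVariables false


set_option linter.unnecessarySeqFocus false in
lemma fin3_cases (i : Fin 3) : i = 0 ∨ i = 1 ∨ i = 2 := by revert i; decide

local notation "s3" => Real.sqrt 3

@[simp] lemma fwl_nil (u : ℂ) : fwl [] u = u := rfl
@[simp] lemma fwl_cons (a : Fin 3) (t : List (Fin 3)) (u : ℂ) :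
    fwl (a :: t) u = f a (fwl t u) := rfl



lemma s3_pos : 0 < s3 := Real.sqrt_pos.mpr (by norm_num)

lemma half_re (w : ℂ) : (w/2).re = w.re/2 := by
  rw [Complex.div_re]; simp [Complex.normSq]; ring
lemma half_im (w : ℂ) : (w/2).im = w.im/2 := by
  rw [Complex.div_im]; simp [Complex.normSq]; ring

lemma p0_re : (p 0).re = 0 := by simp [p]
lemma p0_im : (p 0).im = 0 := by simp [p]
lemma p1_re : (p 1).re = 1 := by simp [p]
lemma p1_im : (p 1).im = 0 := by simp [p]
lemma p2_re : (p 2).re = 1/2 := by simp [p]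
lemma p2_im : (p 2).im = s3/2 := by simp [p]

lemma f_re (i : Fin 3) (z : ℂ) : (f i z).re = (z.re + (p i).re)/2 := by
  rw [f, half_re, Complex.add_re]
lemma f_im (i : Fin 3) (z : ℂ) : (f i z).im = (z.im + (p i).im)/2 := by
  rw [f, half_im, Complex.add_im]

def T : Set ℂ := {z | 0 ≤ z.im ∧ z.im ≤ s3 * z.re ∧ s3 * z.re + z.im ≤ s3}

lemma isClosed_T : IsClosed T := by
  have h1 : IsClosed {z : ℂ | 0 ≤ z.im} := isClosed_le continuous_const Complex.continuous_im
  have h2 : IsClosed {z : ℂ | z.im ≤ s3 * z.re} :=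
    isClosed_le Complex.continuous_im (continuous_const.mul Complex.continuous_re)
  have h3 : IsClosed {z : ℂ | s3 * z.re + z.im ≤ s3} :=
    isClosed_le ((continuous_const.mul Complex.continuous_re).add Complex.continuous_im)
      continuous_const
  exact h1.inter (h2.inter h3)

lemma p_mem_T (i : Fin 3) : p i ∈ T := by
  have h := s3_pos
  rcases fin3_cases i with rfl | rfl | rfl <;>
    refine ⟨?_, ?_, ?_⟩ <;>
      simp only [p0_re, p0_im, p1_re, p1_im, p2_re, p2_im] <;> nlinarith

lemma f_maps_T {z : ℂ} (hz : z ∈ T) (i : Fin 3) : f i z ∈ T := by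
  obtain ⟨h1, h2, h3⟩ := hz
  have hs := s3_pos
  rcases fin3_cases i with rfl | rfl | rfl <;>
  · refine ⟨?_, ?_, ?_⟩ <;>
    simp only [f_re, f_im, p0_re, p0_im, p1_re, p1_im, p2_re, p2_im] <;> nlinarith


lemma f_dist (i : Fin 3) (u v : ℂ) : dist (f i u) (f i v) = dist u v / 2 := by
  rw [f, f, Complex.dist_eq, show (u + p i)/2 - (v + p i)/2 = (u - v)/2 by ring,
    norm_div, Complex.dist_eq]
  norm_num

lemma f_inj {i : Fin 3} {u v : ℂ} (h : f i u = f i v) : u = v := by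
  rw [f, f, div_eq_div_iff (by norm_num) (by norm_num)] at h
  have := mul_right_cancel₀ (by norm_num : (2:ℂ) ≠ 0) h
  linear_combination this

section KK
variable {K : Set ℂ} (hK : IsSG K)
include hK

lemma f_mapsK {i : Fin 3} {u : ℂ} (hu : u ∈ K) : f i u ∈ K := by
  have : f i u ∈ f 0 '' K ∪ f 1 '' K ∪ f 2 '' K := by
    rcases fin3_cases i with rfl | rfl | rfl
    · exact Or.inl (Or.inl (mem_image_of_mem _ hu))
    · exact Or.inl (Or.inr (mem_image_of_mem _ hu))
    · exact Or.inr (mem_image_of_mem _ hu)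
  rwa [← hK.2.2] at this

lemma fwl_mapsK {u : ℂ} (hu : u ∈ K) (w : List (Fin 3)) : fwl w u ∈ K := by
  induction w with
  | nil => exact hu
  | cons a t ih => exact f_mapsK hK ih

lemma decompK {z : ℂ} (hz : z ∈ K) : ∃ i u, u ∈ K ∧ f i u = z := by
  have := hK.2.2 ▸ hz
  rcases this with (⟨u, hu, he⟩ | ⟨u, hu, he⟩) | ⟨u, hu, he⟩
  exacts [⟨0, u, hu, he⟩, ⟨1, u, hu, he⟩, ⟨2, u, hu, he⟩]

lemma p_memK (i : Fin 3) : p i ∈ K := by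
  obtain ⟨z0, hz0⟩ := hK.1
  have hfix : f i (p i) = p i := by rw [f]; ring
  have key : ∀ n : ℕ, (f i)^[n] z0 ∈ K ∧ dist ((f i)^[n] z0) (p i) = dist z0 (p i) / 2^n := by
    intro n
    induction n with
    | zero => exact ⟨hz0, by simp⟩
    | succ m ih =>
      rw [Function.iterate_succ_apply']
      refine ⟨f_mapsK hK ih.1, ?_⟩
      calc dist (f i ((f i)^[m] z0)) (p i) = dist (f i ((f i)^[m] z0)) (f i (p i)) := by rw [hfix]
        _ = dist ((f i)^[m] z0) (p i) / 2 := f_dist _ _ _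
        _ = dist z0 (p i) / 2 ^ (m+1) := by rw [ih.2, pow_succ]; ring
  have htend : Filter.Tendsto (fun n => (f i)^[n] z0) Filter.atTop (nhds (p i)) := by
    rw [tendsto_iff_dist_tendsto_zero]
    have : (fun n : ℕ => dist ((f i)^[n] z0) (p i)) = fun n => dist z0 (p i) * (1/2)^n := by
      funext n; rw [(key n).2]; rw [div_pow]; ring
    rw [this]
    simpa using (tendsto_pow_atTop_nhds_zero_of_lt_one (by norm_num : (0:ℝ) ≤ 1/2)
      (by norm_num)).const_mul (dist z0 (p i))
  exact hK.2.1.isClosed.mem_of_tendsto htend (Filter.Eventually.of_forall fun n => (key n).1)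

lemma K_sub_T : K ⊆ T := by
  intro z hz
  have step : ∀ n : ℕ, ∀ z ∈ K, ∃ (w : List (Fin 3)) (u : ℂ), u ∈ K ∧ w.length = n ∧ z = fwl w u := by
    intro n
    induction n with
    | zero => intro z hz; exact ⟨[], z, hz, rfl, rfl⟩
    | succ m ih =>
      intro z hz
      obtain ⟨i, u, hu, he⟩ := decompK hK hz
      obtain ⟨w, v, hv, hl, he2⟩ := ih u hu
      exact ⟨i :: w, v, hv, by simp [hl], by simp [← he2, he]⟩
  have fwl_T : ∀ (w : List (Fin 3)) {u : ℂ}, u ∈ T → fwl w u ∈ T := by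
    intro w
    induction w with
    | nil => intro u hu; exact hu
    | cons a t ih => intro u hu; exact f_maps_T (ih hu) a
  have fwl_dist : ∀ (w : List (Fin 3)) (u v : ℂ),
      dist (fwl w u) (fwl w v) = dist u v / 2 ^ w.length := by
    intro w
    induction w with
    | nil => intro u v; simp
    | cons a t ih =>
      intro u v
      rw [fwl_cons, fwl_cons, f_dist, ih, List.length_cons, pow_succ]
      ring
  obtain ⟨C, hC⟩ : ∃ C, ∀ u ∈ K, dist u z ≤ C := by
    obtain ⟨r, hr⟩ := hK.2.1.isBounded.subset_closedBall z
    exact ⟨r, fun u hu => hr hu⟩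
  set C' := C + dist z (p 0) with hC'
  have hC'0 : 0 ≤ C' := by
    have := hC z hz
    simp at this
    positivity
  rw [← isClosed_T.closure_eq, Metric.mem_closure_iff]
  intro ε hε
  obtain ⟨n, hn⟩ := pow_unbounded_of_one_lt (C' / ε) (one_lt_two (α := ℝ))
  obtain ⟨w, u, hu, hl, he⟩ := step n z hz
  refine ⟨fwl w (p 0), fwl_T w (p_mem_T 0), ?_⟩
  have h1 : dist z (fwl w (p 0)) = dist u (p 0) / 2 ^ n := by rw [he, fwl_dist, hl]
  have h2 : dist u (p 0) ≤ C' := by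
    calc dist u (p 0) ≤ dist u z + dist z (p 0) := dist_triangle _ _ _
      _ ≤ C' := by rw [hC']; linarith [hC u hu]
  have h2n : (0:ℝ) < 2 ^ n := by positivity
  have : C' < ε * 2 ^ n := by
    rw [div_lt_iff₀ hε] at hn; linarith [hn]
  rw [h1]
  calc dist u (p 0) / 2 ^ n ≤ C' / 2 ^ n := by gcongr
    _ < ε := by rw [div_lt_iff₀ h2n]; linarith

end KK
lemma f_eq {i j : Fin 3} {u v : ℂ} (h : f i u = f j v) : u + p i = v + p j := by
  rw [f, f, div_eq_div_iff (by norm_num) (by norm_num)] at h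
  have := mul_right_cancel₀ (by norm_num : (2:ℂ) ≠ 0) h
  linear_combination this

lemma ov01 {u v : ℂ} (hu : u ∈ T) (hv : v ∈ T) (h : f 0 u = f 1 v) : u = p 1 ∧ v = p 0 := by
  have h' := f_eq h
  have hre : u.re + (p 0).re = v.re + (p 1).re := by
    rw [← Complex.add_re, ← Complex.add_re, h']
  have him : u.im + (p 0).im = v.im + (p 1).im := by
    rw [← Complex.add_im, ← Complex.add_im, h']
  rw [p0_re, p1_re] at hre; rw [p0_im, p1_im] at him
  obtain ⟨a1, a2, a3⟩ := hu; obtain ⟨b1, b2, b3⟩ := hv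
  have hs := s3_pos
  have e1 : v.im = 0 := le_antisymm (by nlinarith) b1
  have e0 : s3 * v.re = 0 := le_antisymm (by nlinarith) (by nlinarith)
  have e2 : v.re = 0 := by
    rcases mul_eq_zero.mp e0 with h | h
    · exact absurd h (ne_of_gt hs)
    · exact h
  constructor
  · exact Complex.ext (by rw [p1_re]; linarith) (by rw [p1_im]; linarith)
  · exact Complex.ext (by rw [p0_re]; linarith) (by rw [p0_im]; linarith)

lemma ov02 {u v : ℂ} (hu : u ∈ T) (hv : v ∈ T) (h : f 0 u = f 2 v) : u = p 2 ∧ v = p 0 := by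
  have h' := f_eq h
  have hre : u.re + (p 0).re = v.re + (p 2).re := by
    rw [← Complex.add_re, ← Complex.add_re, h']
  have him : u.im + (p 0).im = v.im + (p 2).im := by
    rw [← Complex.add_im, ← Complex.add_im, h']
  rw [p0_re, p2_re] at hre; rw [p0_im, p2_im] at him
  obtain ⟨a1, a2, a3⟩ := hu; obtain ⟨b1, b2, b3⟩ := hv
  have hs := s3_pos
  have e1 : v.im = 0 := le_antisymm (by nlinarith) b1
  have e0 : s3 * v.re = 0 := le_antisymm (by nlinarith) (by nlinarith)
  have e2 : v.re = 0 := by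
    rcases mul_eq_zero.mp e0 with h | h
    · exact absurd h (ne_of_gt hs)
    · exact h
  constructor
  · exact Complex.ext (by rw [p2_re]; linarith) (by rw [p2_im]; linarith)
  · exact Complex.ext (by rw [p0_re]; linarith) (by rw [p0_im]; linarith)

lemma ov12 {u v : ℂ} (hu : u ∈ T) (hv : v ∈ T) (h : f 1 u = f 2 v) : u = p 2 ∧ v = p 1 := by
  have h' := f_eq h
  have hre : u.re + (p 1).re = v.re + (p 2).re := by
    rw [← Complex.add_re, ← Complex.add_re, h']
  have him : u.im + (p 1).im = v.im + (p 2).im := by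
    rw [← Complex.add_im, ← Complex.add_im, h']
  rw [p1_re, p2_re] at hre; rw [p1_im, p2_im] at him
  obtain ⟨a1, a2, a3⟩ := hu; obtain ⟨b1, b2, b3⟩ := hv
  have hs := s3_pos
  have e1 : v.im = 0 := le_antisymm (by nlinarith) b1
  have e0 : s3 * v.re = s3 * 1 := le_antisymm (by nlinarith) (by nlinarith)
  have e2 : v.re = 1 := mul_left_cancel₀ (ne_of_gt hs) e0
  constructor
  · exact Complex.ext (by rw [p2_re]; linarith) (by rw [p2_im]; linarith)
  · exact Complex.ext (by rw [p1_re]; linarith) (by rw [p1_im]; linarith)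

lemma overlap {i j : Fin 3} {u v : ℂ} (hij : i ≠ j) (hu : u ∈ T) (hv : v ∈ T)
    (h : f i u = f j v) : u = p j ∧ v = p i := by
  rcases fin3_cases i with rfl | rfl | rfl <;> rcases fin3_cases j with rfl | rfl | rfl <;>
    first
      | exact absurd rfl hij
      | exact ov01 hu hv h
      | exact ov02 hu hv h
      | exact ov12 hu hv h
      | exact ⟨(ov01 hv hu h.symm).2, (ov01 hv hu h.symm).1⟩
      | exact ⟨(ov02 hv hu h.symm).2, (ov02 hv hu h.symm).1⟩
      | exact ⟨(ov12 hv hu h.symm).2, (ov12 hv hu h.symm).1⟩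
lemma neg1 : (-1 : Fin 3) = 2 := rfl
lemma neg2 : (-2 : Fin 3) = 1 := rfl
lemma neg3 : (-3 : Fin 3) = 0 := rfl

def ee (k : Fin 3) : Fin 3 → ℝ := fun l => if l = k then 1 else 0

def N (i : Fin 3) (v : Fin 3 → ℝ) : Fin 3 → ℝ := fun l =>
  if l = i then (3 * v i + 2 * (v 0 + v 1 + v 2)) / 5 else (2 * v l + v (other i l)) / 5

def NT (i : Fin 3) (x : Fin 3 → ℝ) : Fin 3 → ℝ := fun l =>
  if l = i then x i else (2 * x i + 2 * x l + x (other i l)) / 5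

def Minv (i : Fin 3) (y : Fin 3 → ℝ) : Fin 3 → ℝ := fun l =>
  if l = i then y i else (10 * y l - 5 * y (other i l) - 2 * y i) / 3

lemma N_ee_self (i : Fin 3) : N i (ee i) = ee i := by
  rcases fin3_cases i with rfl | rfl | rfl <;>
    · funext l
      rcases fin3_cases l with rfl | rfl | rfl <;>
        simp (config := { decide := true }) [N, ee, other, neg1, neg2, neg3] <;> norm_num

lemma N_ee_symm {i j : Fin 3} (h : i ≠ j) : N i (ee j) = N j (ee i) := by
  rcases fin3_cases i with rfl | rfl | rfl <;> rcases fin3_cases j with rfl | rfl | rfl <;>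
    first
    | exact absurd rfl h
    | · funext l
        rcases fin3_cases l with rfl | rfl | rfl <;>
          simp (config := { decide := true }) [N, ee, other, neg1, neg2, neg3] <;> norm_num

lemma N_sum (i : Fin 3) (v : Fin 3 → ℝ) :
    N i v 0 + N i v 1 + N i v 2 = v 0 + v 1 + v 2 := by
  rcases fin3_cases i with rfl | rfl | rfl <;>
    simp (config := { decide := true }) [N, other, neg1, neg2, neg3] <;> ring

lemma N_ee_harm {i j : Fin 3} (h : i ≠ j) :
    N i (ee j) = fun l => (2 * ee i l + 2 * ee j l + ee (other i j) l) / 5 := by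
  rcases fin3_cases i with rfl | rfl | rfl <;> rcases fin3_cases j with rfl | rfl | rfl <;>
    first
    | exact absurd rfl h
    | · funext l
        rcases fin3_cases l with rfl | rfl | rfl <;>
          simp (config := { decide := true }) [N, ee, other, neg1, neg2, neg3] <;> norm_num

lemma N_combo (a : Fin 3) (u v t : Fin 3 → ℝ) :
    N a (fun l => (2 * u l + 2 * v l + t l) / 5) =
      fun l => (2 * N a u l + 2 * N a v l + N a t l) / 5 := by
  funext l
  by_cases h : l = a
  · simp only [N, if_pos h]; ring
  · simp only [N, if_neg h]; ring

lemma N_adjoint (a : Fin 3) (x v : Fin 3 → ℝ) :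
    x 0 * N a v 0 + x 1 * N a v 1 + x 2 * N a v 2 =
      NT a x 0 * v 0 + NT a x 1 * v 1 + NT a x 2 * v 2 := by
  rcases fin3_cases a with rfl | rfl | rfl <;>
    simp (config := { decide := true }) [N, NT, other, neg1, neg2, neg3] <;> ring

lemma NT_Minv (a : Fin 3) (y : Fin 3 → ℝ) : NT a (Minv a y) = y := by
  rcases fin3_cases a with rfl | rfl | rfl <;>
    · funext l
      rcases fin3_cases l with rfl | rfl | rfl <;>
        simp (config := { decide := true }) [NT, Minv, other, neg1, neg2, neg3] <;> ring

lemma N_lip (i : Fin 3) (a b : Fin 3 → ℝ)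
    (hsum : a 0 + a 1 + a 2 = b 0 + b 1 + b 2) :
    dist (N i a) (N i b) ≤ 3/5 * dist a b := by
  have h0 : (0:ℝ) ≤ 3/5 * dist a b := by positivity
  rw [dist_pi_le_iff h0]
  intro l
  have hd : ∀ m : Fin 3, |a m - b m| ≤ dist a b := by
    intro m; rw [← Real.dist_eq]; exact dist_le_pi_dist a b m
  rw [Real.dist_eq]
  by_cases h : l = i
  · subst h
    simp only [N]
    simp only [if_true]
    have e : (3 * a l + 2 * (a 0 + a 1 + a 2)) / 5 - (3 * b l + 2 * (b 0 + b 1 + b 2)) / 5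
        = 3/5 * (a l - b l) := by rw [hsum]; ring
    rw [e, abs_mul, abs_of_nonneg (by norm_num : (0:ℝ) ≤ 3/5)]
    have := hd l
    nlinarith [abs_nonneg (a l - b l)]
  · simp only [N]
    rw [if_neg h, if_neg h]
    have e : (2 * a l + a (other i l)) / 5 - (2 * b l + b (other i l)) / 5
        = 2/5 * (a l - b l) + 1/5 * (a (other i l) - b (other i l)) := by ring
    rw [e]
    calc |2/5 * (a l - b l) + 1/5 * (a (other i l) - b (other i l))|
        ≤ |2/5 * (a l - b l)| + |1/5 * (a (other i l) - b (other i l))| := abs_add_le _ _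
      _ = 2/5 * |a l - b l| + 1/5 * |a (other i l) - b (other i l)| := by
          rw [abs_mul, abs_mul, abs_of_nonneg (by norm_num : (0:ℝ) ≤ 2/5),
            abs_of_nonneg (by norm_num : (0:ℝ) ≤ 1/5)]
      _ ≤ 2/5 * dist a b + 1/5 * dist a b := by
          have h1 := hd l; have h2 := hd (other i l); nlinarith
      _ = 3/5 * dist a b := by ring

lemma N_continuous (i : Fin 3) : Continuous (N i) := by
  apply continuous_pi
  intro l
  unfold N
  by_cases h : l = i <;> simp only [h, if_true, if_false, if_pos, if_neg] <;> fun_prop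

lemma f_fix (i : Fin 3) : f i (p i) = p i := by rw [f]; ring
lemma f_continuous (i : Fin 3) : Continuous (f i) := by
  unfold f; fun_prop
lemma f_cancel (i : Fin 3) (u : ℂ) : 2 * f i u - p i = u := by rw [f]; ring

/-- choice of a cell containing a point of K -/
def pick {K : Set ℂ} (hK : IsSG K) {z : ℂ} (hz : z ∈ K) : Fin 3 × ℂ :=
  ⟨(decompK hK hz).choose, (decompK hK hz).choose_spec.choose⟩
lemma pick_mem {K : Set ℂ} (hK : IsSG K) {z : ℂ} (hz : z ∈ K) : (pick hK hz).2 ∈ K :=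
  (decompK hK hz).choose_spec.choose_spec.1
lemma pick_eq {K : Set ℂ} (hK : IsSG K) {z : ℂ} (hz : z ∈ K) :
    f (pick hK hz).1 (pick hK hz).2 = z :=
  (decompK hK hz).choose_spec.choose_spec.2

/-- the subdivision operator on raw functions -/
def Phi0 {K : Set ℂ} (hK : IsSG K) (G : ℂ → Fin 3 → ℝ) : ℂ → Fin 3 → ℝ := fun z =>
  if hz : z ∈ K then N (pick hK hz).1 (G (pick hK hz).2) else 0

lemma Phi0_eq {K : Set ℂ} (hK : IsSG K) {G : ℂ → Fin 3 → ℝ}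
    (hG : ∀ k, G (p k) = ee k) {z : ℂ} (hz : z ∈ K) {i : Fin 3} {u : ℂ}
    (hu : u ∈ K) (he : f i u = z) : Phi0 hK G z = N i (G u) := by
  unfold Phi0
  rw [dif_pos hz]
  have hv : (pick hK hz).2 ∈ K := pick_mem hK hz
  have hjv : f (pick hK hz).1 (pick hK hz).2 = z := pick_eq hK hz
  by_cases hij : (pick hK hz).1 = i
  · rw [hij] at hjv ⊢
    rw [f_inj (hjv.trans he.symm)]
  · have hov := overlap hij (K_sub_T hK hv) (K_sub_T hK hu) (hjv.trans he.symm)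
    rw [hov.1, hG i]
    have : u = p (pick hK hz).1 := hov.2
    rw [this, hG]
    exact N_ee_symm hij

lemma Phi0_boundary {K : Set ℂ} (hK : IsSG K) {G : ℂ → Fin 3 → ℝ}
    (hG : ∀ k, G (p k) = ee k) (k : Fin 3) : Phi0 hK G (p k) = ee k := by
  rw [Phi0_eq hK hG (p_memK hK k) (p_memK hK k) (f_fix k), hG, N_ee_self]

lemma Phi0_continuousOn {K : Set ℂ} (hK : IsSG K) {G : ℂ → Fin 3 → ℝ}
    (hG : ∀ k, G (p k) = ee k) (hGc : ContinuousOn G K) :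
    ContinuousOn (Phi0 hK G) K := by
  intro z hz
  have hsub : K ⊆ f 0 '' K ∪ f 1 '' K ∪ f 2 '' K := hK.2.2.le
  have cwa : ∀ i : Fin 3, ContinuousWithinAt (Phi0 hK G) (f i '' K) z := by
    intro i
    by_cases hzi : z ∈ f i '' K
    · have hmaps : MapsTo (fun w => 2 * w - p i) (f i '' K) K := by
        rintro y ⟨u, hu, rfl⟩
        show 2 * f i u - p i ∈ K
        rw [f_cancel]; exact hu
      have hcl : ContinuousOn (fun w => N i (G (2 * w - p i))) (f i '' K) := by
        apply (N_continuous i).comp_continuousOn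
        exact hGc.comp (Continuous.continuousOn (by fun_prop)) hmaps
      have heq : ∀ y ∈ f i '' K, Phi0 hK G y = N i (G (2 * y - p i)) := by
        rintro y ⟨u, hu, rfl⟩
        rw [f_cancel]
        exact Phi0_eq hK hG (f_mapsK hK hu) hu rfl
      exact (hcl z hzi).congr heq (heq z hzi)
    · refine continuousWithinAt_of_notMem_closure ?_
      rwa [(hK.2.1.image (f_continuous i)).isClosed.closure_eq]
  exact (((cwa 0).union (cwa 1)).union (cwa 2)).mono hsub

lemma Phi0_sum {K : Set ℂ} (hK : IsSG K) {G : ℂ → Fin 3 → ℝ}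
    (hGs : ∀ u ∈ K, G u 0 + G u 1 + G u 2 = 1) {z : ℂ} (hz : z ∈ K) :
    Phi0 hK G z 0 + Phi0 hK G z 1 + Phi0 hK G z 2 = 1 := by
  unfold Phi0
  rw [dif_pos hz, N_sum]
  exact hGs _ (pick_mem hK hz)

/-- the barycentric-coordinates initial function -/
def B0 : ℂ → Fin 3 → ℝ := fun z =>
  ![1 - (z.re - z.im / s3) - 2 * z.im / s3, z.re - z.im / s3, 2 * z.im / s3]

lemma B0_continuous : Continuous B0 := by
  apply continuous_pi
  intro l
  rcases (by revert l; decide : l = 0 ∨ l = 1 ∨ l = 2) with rfl | rfl | rfl <;>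
    simp only [B0, Matrix.cons_val_zero, Matrix.cons_val_one, Matrix.head_cons,
      Matrix.cons_val_two, Matrix.tail_cons] <;> fun_prop

lemma B0_boundary (k : Fin 3) : B0 (p k) = ee k := by
  have hs : s3 ≠ 0 := ne_of_gt s3_pos
  rcases (by revert k; decide : k = 0 ∨ k = 1 ∨ k = 2) with rfl | rfl | rfl <;>
    · funext l
      rcases (by revert l; decide : l = 0 ∨ l = 1 ∨ l = 2) with rfl | rfl | rfl <;>
        simp (config := { decide := true }) [B0, ee, p0_re, p0_im, p1_re, p1_im, p2_re, p2_im] <;>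
          field_simp <;> norm_num

lemma B0_sum (z : ℂ) : B0 z 0 + B0 z 1 + B0 z 2 = 1 := by
  simp [B0]; ring

/-- main construction: the vector of harmonic functions -/
lemma exists_H {K : Set ℂ} (hK : IsSG K) :
    ∃ H : ℂ → Fin 3 → ℝ, ContinuousOn H K ∧ (∀ k, H (p k) = ee k) ∧
      (∀ z ∈ K, H z 0 + H z 1 + H z 2 = 1) ∧
      (∀ (i : Fin 3), ∀ u ∈ K, H (f i u) = N i (H u)) := by
  haveI : CompactSpace ↥K := isCompact_iff_compactSpace.mp hK.2.1
  set SX : Set C(↥K, Fin 3 → ℝ) :=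
    {H | (∀ k, H ⟨p k, p_memK hK k⟩ = ee k) ∧ ∀ z : ↥K, H z 0 + H z 1 + H z 2 = 1} with hSX
  -- extension operator
  let ext : C(↥K, Fin 3 → ℝ) → ℂ → Fin 3 → ℝ := fun H z =>
    if h : z ∈ K then H ⟨z, h⟩ else 0
  have ext_eq : ∀ (H : C(↥K, Fin 3 → ℝ)) (z : ℂ) (h : z ∈ K), ext H z = H ⟨z, h⟩ := by
    intro H z h; simp only [ext, dif_pos h]
  have ext_cont : ∀ H : C(↥K, Fin 3 → ℝ), ContinuousOn (ext H) K := by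
    intro H
    rw [continuousOn_iff_continuous_restrict]
    have : K.domRestrict (ext H) = ⇑H := by
      funext z; exact (ext_eq H z.1 z.2).trans (by rw [Subtype.coe_eta])
    rw [this]; exact H.continuous
  have ext_bdry : ∀ H ∈ SX, ∀ k, ext H (p k) = ee k := by
    intro H hH k; rw [ext_eq H _ (p_memK hK k)]; exact hH.1 k
  have ext_sum : ∀ H ∈ SX, ∀ u ∈ K, ext H u 0 + ext H u 1 + ext H u 2 = 1 := by
    intro H hH u hu; rw [ext_eq H u hu]; exact hH.2 ⟨u, hu⟩
  -- the operator
  have Phi_mem : ∀ H ∈ SX, ∃ G : C(↥K, Fin 3 → ℝ),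
      G ∈ SX ∧ ∀ z : ↥K, G z = Phi0 hK (ext H) z.1 := by
    intro H hH
    refine ⟨⟨fun z => Phi0 hK (ext H) z.1, ?_⟩, ⟨?_, ?_⟩, fun z => rfl⟩
    · exact continuousOn_iff_continuous_restrict.mp
        (Phi0_continuousOn hK (ext_bdry H hH) (ext_cont H))
    · intro k
      exact Phi0_boundary hK (ext_bdry H hH) k
    · intro z
      exact Phi0_sum hK (ext_sum H hH) z.2
  choose Phif hPhif using Phi_mem
  let Phi : ↥SX → ↥SX := fun H => ⟨Phif H.1 H.2, (hPhif H.1 H.2).1⟩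
  -- instances
  haveI : Nonempty ↥SX := by
    refine ⟨⟨⟨fun z => B0 z.1, B0_continuous.comp continuous_subtype_val⟩, ?_, ?_⟩⟩
    · intro k; exact B0_boundary k
    · intro z; exact B0_sum z.1
  haveI : CompleteSpace ↥SX := by
    refine IsClosed.completeSpace_coe (hs := ?_)
    have h1 : IsClosed (⋂ k : Fin 3, {H : C(↥K, Fin 3 → ℝ) | H ⟨p k, p_memK hK k⟩ = ee k}) := by
      apply isClosed_iInter
      intro k
      exact isClosed_singleton.preimage (continuous_eval_const _)
    have h2 : IsClosed (⋂ z : ↥K, {H : C(↥K, Fin 3 → ℝ) | H z 0 + H z 1 + H z 2 = 1}) := by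
      apply isClosed_iInter
      intro z
      have : Continuous fun H : C(↥K, Fin 3 → ℝ) => H z 0 + H z 1 + H z 2 := by
        have hz : Continuous fun H : C(↥K, Fin 3 → ℝ) => H z :=
          continuous_eval_const _
        fun_prop
      exact isClosed_singleton.preimage this
    have : SX = (⋂ k : Fin 3, {H : C(↥K, Fin 3 → ℝ) | H ⟨p k, p_memK hK k⟩ = ee k}) ∩
        (⋂ z : ↥K, {H : C(↥K, Fin 3 → ℝ) | H z 0 + H z 1 + H z 2 = 1}) := by
      ext H; simp [hSX, mem_iInter]
    rw [this]
    exact h1.inter h2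
  -- contraction
  have hcontr : ContractingWith (3/5 : NNReal) Phi := by
    constructor
    · rw [← NNReal.coe_lt_coe]
      norm_num
    · apply LipschitzWith.of_dist_le_mul
      intro H1 H2
      rw [Subtype.dist_eq, Subtype.dist_eq]
      have hco : ((3/5 : NNReal) : ℝ) = 3/5 := by norm_num
      rw [hco]
      have h0 : (0:ℝ) ≤ 3/5 * dist (H1:C(↥K, Fin 3 → ℝ)) H2 := by positivity
      rw [ContinuousMap.dist_le h0]
      intro z
      rw [(hPhif H1.1 H1.2).2 z, (hPhif H2.1 H2.2).2 z]
      unfold Phi0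
      rw [dif_pos z.2, dif_pos z.2]
      set u := (pick hK z.2).2 with hu
      have huK : u ∈ K := pick_mem hK z.2
      calc dist (N (pick hK z.2).1 (ext H1.1 u)) (N (pick hK z.2).1 (ext H2.1 u))
          ≤ 3/5 * dist (ext H1.1 u) (ext H2.1 u) := by
            apply N_lip
            rw [ext_sum H1.1 H1.2 u huK, ext_sum H2.1 H2.2 u huK]
        _ ≤ 3/5 * dist (H1:C(↥K, Fin 3 → ℝ)) H2 := by
            have : dist (ext H1.1 u) (ext H2.1 u) ≤ dist (H1:C(↥K, Fin 3 → ℝ)) H2 := by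
              rw [ext_eq H1.1 u huK, ext_eq H2.1 u huK]
              exact ContinuousMap.dist_apply_le_dist _
            linarith
  -- fixed point
  set Hfix := ContractingWith.fixedPoint Phi hcontr with hHfixdef
  have hfp : Phi Hfix = Hfix := hcontr.fixedPoint_isFixedPt
  have hval : Phif Hfix.1 Hfix.2 = Hfix.1 := congrArg Subtype.val hfp
  refine ⟨ext Hfix.1, ext_cont _, ext_bdry _ Hfix.2, ext_sum _ Hfix.2, ?_⟩
  intro i u hu
  have hfiu : f i u ∈ K := f_mapsK hK hu
  rw [ext_eq _ _ hfiu]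
  have h1 : Hfix.1 ⟨f i u, hfiu⟩ = Phif Hfix.1 Hfix.2 ⟨f i u, hfiu⟩ := by rw [hval]
  rw [h1, (hPhif Hfix.1 Hfix.2).2 ⟨f i u, hfiu⟩]
  exact Phi0_eq hK (ext_bdry _ Hfix.2) hfiu hu rfl

/-- iterated harmonic subdivision along a word -/
def Gmap : List (Fin 3) → (Fin 3 → ℝ) → (Fin 3 → ℝ)
  | [], x => x
  | a :: w, x => Gmap w (NT a x)

lemma Gmap_surj (w : List (Fin 3)) (t : Fin 3 → ℝ) : ∃ x, Gmap w x = t := by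
  induction w with
  | nil => exact ⟨t, rfl⟩
  | cons a w ih =>
    obtain ⟨y, hy⟩ := ih
    exact ⟨Minv a y, by rw [Gmap, NT_Minv, hy]⟩

lemma mid_eq (i j : Fin 3) : (p i + p j) / 2 = f i (p j) := by rw [f]; ring

section main
variable {K : Set ℂ} (hK : IsSG K) {H : ℂ → Fin 3 → ℝ}
  (hHc : ContinuousOn H K) (hHb : ∀ k, H (p k) = ee k)
  (hkey : ∀ (i : Fin 3), ∀ u ∈ K, H (f i u) = N i (H u))

include hK hHb hkey

lemma H_harm (w : List (Fin 3)) {i j : Fin 3} (hij : i ≠ j) :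
    H (fwl w ((p i + p j) / 2)) = fun l =>
      (2 * H (fwl w (p i)) l + 2 * H (fwl w (p j)) l + H (fwl w (p (other i j))) l) / 5 := by
  induction w with
  | nil =>
    simp only [fwl_nil]
    rw [mid_eq, hkey i (p j) (p_memK hK j), hHb j, N_ee_harm hij]
    funext l
    simp only [hHb]
  | cons a w ih =>
    simp only [fwl_cons]
    have hm : (p i + p j) / 2 ∈ K := by rw [mid_eq]; exact f_mapsK hK (p_memK hK j)
    rw [hkey a _ (fwl_mapsK hK hm w), ih, N_combo]
    funext l
    rw [← hkey a _ (fwl_mapsK hK (p_memK hK i) w),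
      ← hkey a _ (fwl_mapsK hK (p_memK hK j) w),
      ← hkey a _ (fwl_mapsK hK (p_memK hK (other i j)) w)]

lemma U_val (x : Fin 3 → ℝ) (w : List (Fin 3)) (k : Fin 3) :
    x 0 * H (fwl w (p k)) 0 + x 1 * H (fwl w (p k)) 1 + x 2 * H (fwl w (p k)) 2
      = Gmap w x k := by
  induction w generalizing x with
  | nil =>
    simp only [fwl_nil, Gmap, hHb k]
    rcases fin3_cases k with rfl | rfl | rfl <;>
      simp (config := { decide := true }) [ee]
  | cons a w ih =>
    simp only [fwl_cons, Gmap]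
    rw [hkey a _ (fwl_mapsK hK (p_memK hK k) w), N_adjoint]
    exact ih (NT a x)

end main

theorem statement9 (K : Set ℂ) (hK : IsSG K) (n : ℕ) (hn : 1 ≤ n)
    (w : Fin n → Fin 3) (a b c : ℝ) :
    ∃ (x0 x1 x2 : ℝ) (U : ℂ → ℝ), IsHarm K x0 x1 x2 U ∧
      U (fw w (p 0)) = a ∧ U (fw w (p 1)) = b ∧ U (fw w (p 2)) = c := by
  obtain ⟨H, hHc, hHb, hHs, hkey⟩ := exists_H hK
  obtain ⟨x, hx⟩ := Gmap_surj (List.ofFn w) ![a, b, c]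
  set U : ℂ → ℝ := fun z => x 0 * H z 0 + x 1 * H z 1 + x 2 * H z 2 with hU
  have hUval : ∀ (v : List (Fin 3)) (k : Fin 3), U (fwl v (p k)) = Gmap v x k := by
    intro v k
    exact U_val hK hHb hkey x v k
  have hUp : ∀ k, U (p k) = x k := by
    intro k
    have := hUval [] k
    simpa [Gmap] using this
  refine ⟨x 0, x 1, x 2, U, ⟨?_, hUp 0, hUp 1, hUp 2, ?_⟩, ?_, ?_, ?_⟩
  · -- continuity
    have h0 : ContinuousOn (fun z => H z 0) K :=
      (continuous_apply (0 : Fin 3)).comp_continuousOn hHc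
    have h1 : ContinuousOn (fun z => H z 1) K :=
      (continuous_apply (1 : Fin 3)).comp_continuousOn hHc
    have h2 : ContinuousOn (fun z => H z 2) K :=
      (continuous_apply (2 : Fin 3)).comp_continuousOn hHc
    exact ((h0.const_smul (x 0)).add (h1.const_smul (x 1))).add (h2.const_smul (x 2))
  · -- harmonic identity
    intro v i j hij
    have hh := H_harm hK hHb hkey v hij
    rw [hU]
    simp only []
    rw [congrFun hh 0, congrFun hh 1, congrFun hh 2]
    ring
  · rw [fw, hUval, hx]; rfl
  · rw [fw, hUval, hx]; rfl
  · rw [fw, hUval, hx]; rfl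

end SG
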